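/- Suppose R : X → X is a linear operator on a Lie algebra X, x₀, y₁ ∈ X satisfy L_{x₀}R = 0, L_{y₁}R = −R², and [x₀, y₁] = 2 R x₀, where (L_x R)(y) = [x, Ry] − R[x, y]. Assume further that R is hereditary (N_R = 0). Define xₙ = Rⁿ x₀ for n ≥ 0 and yₙ = R^{n−1} y₁ for n ≥ 1. Then L_{x₀}(Rⁿ) = 0 and L_{y₁}(Rⁿ) = −n R^{n+1} for all n ≥ 0. -/
import Mathlib


/-- If `R` is hereditary, `L_{x₀}R = 0`, `L_{y₁}R = −R²` and `[x₀,y₁] = 2Rx₀`,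
then `L_{x₀}(Rⁿ) = 0` and `L_{y₁}(Rⁿ) = −n R^{n+1}` for all `n ≥ 0`. -/
theorem lieDeriv_powers_of_master_symmetry {X : Type*} [LieRing X] [LieAlgebra ℝ X]
    (R : X →ₗ[ℝ] X)
    (hR : ∀ x y : X,
      ⁅R x, R y⁆ - R ⁅R x, y⁆ - R ⁅x, R y⁆ + R (R ⁅x, y⁆) = 0)
    (x₀ y₁ : X)
    (hx₀ : ∀ y : X, ⁅x₀, R y⁆ - R ⁅x₀, y⁆ = 0)
    (hy₁ : ∀ y : X, ⁅y₁, R y⁆ - R ⁅y₁, y⁆ = -(R (R y)))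
    (hxy : ⁅x₀, y₁⁆ = (2 : ℝ) • R x₀) :
    ∀ (n : ℕ) (y : X),
      (⁅x₀, (R ^ n) y⁆ - (R ^ n) ⁅x₀, y⁆ = 0) ∧
      (⁅y₁, (R ^ n) y⁆ - (R ^ n) ⁅y₁, y⁆ = -((n : ℝ) • (R ^ (n + 1)) y)) := by
  intro n
  induction n with
  | zero => intro y; simp
  | succ n ih =>
    intro y
    have e : ∀ z : X, (R ^ (n + 1)) z = R ((R ^ n) z) := by
      intro z; rw [pow_succ']; rfl
    have e2 : ∀ z : X, (R ^ (n + 2)) z = R ((R ^ (n + 1)) z) := by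
      intro z; rw [pow_succ']; rfl
    have h1 : ⁅x₀, R ((R ^ n) y)⁆ = R ⁅x₀, (R ^ n) y⁆ :=
      sub_eq_zero.mp (hx₀ ((R ^ n) y))
    have h2 : ⁅x₀, (R ^ n) y⁆ = (R ^ n) ⁅x₀, y⁆ := sub_eq_zero.mp (ih y).1
    have h3 : ⁅y₁, R ((R ^ n) y)⁆ = R ⁅y₁, (R ^ n) y⁆ - R (R ((R ^ n) y)) := by
      have h := hy₁ ((R ^ n) y)
      rw [sub_eq_iff_eq_add] at h
      rw [h]; abel
    have h4 : ⁅y₁, (R ^ n) y⁆ = (R ^ n) ⁅y₁, y⁆ - (n : ℝ) • (R ^ (n + 1)) y := by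
      have h := (ih y).2
      rw [sub_eq_iff_eq_add] at h
      rw [h]; abel
    constructor
    · rw [e y, e ⁅x₀, y⁆, h1, h2, sub_self]
    · rw [e y, e ⁅y₁, y⁆, h3, h4, map_sub, map_smul, ← e ⁅y₁, y⁆, ← e y, ← e2 y]
      push_cast
      module
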